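/- arXiv:math/0002254 — 4 statements merged into one kernel-verified Lean document; each statement's English description precedes it below -/
import Mathlib

section
/- If χ is a primitive odd Dirichlet character modulo q, then L(0, conj(χ)) / L(1, χ) = τ(conj(χ))/(πi), where τ(χ) = Σ_{b=1}^{q} χ(b) e^{2πib/q} is the Gauss sum. -/
open Real Complex

/-- The Gauss sum `τ(χ) = ∑_{b=1}^q χ(b) e^{2πib/q}` of a Dirichlet character mod `q`. -/
noncomputable def gaussSumExp {q : ℕ} (χ : DirichletCharacter ℂ q) : ℂ :=
  ∑ b ∈ Finset.range q, χ (b : ZMod q) * Complex.exp (2 * π * I * b / q)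

lemma gaussSumExp_eq_gaussSum {q : ℕ} [NeZero q] (ψ : DirichletCharacter ℂ q) :
    gaussSumExp ψ = gaussSum ψ ZMod.stdAddChar := by
  rw [gaussSumExp, gaussSum]
  refine Finset.sum_nbij' (fun b ↦ (b : ZMod q)) (fun a ↦ a.val) (fun _ _ ↦ Finset.mem_univ _)
    (fun a _ ↦ Finset.mem_range.mpr (ZMod.val_lt a)) (fun b hb ↦ ?_)
    (fun a _ ↦ by simp [ZMod.natCast_val, ZMod.cast_id]) (fun b hb ↦ ?_)
  · exact ZMod.val_cast_of_lt (Finset.mem_range.mp hb)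
  · have : ZMod.stdAddChar ((b : ZMod q)) = Complex.exp (2 * π * I * b / q) := by
      have := ZMod.stdAddChar_coe (N := q) (b : ℤ)
      push_cast at this ⊢
      simpa using this
    rw [this]

lemma factorsThrough_inv {q d : ℕ} {χ : DirichletCharacter ℂ q}
    (h : χ.FactorsThrough d) : (χ⁻¹).FactorsThrough d := by
  obtain ⟨hd, χ₀, rfl⟩ := h
  exact ⟨hd, χ₀⁻¹, (map_inv (DirichletCharacter.changeLevel hd) χ₀).symm⟩

lemma conductor_inv {q : ℕ} (χ : DirichletCharacter ℂ q) :
    (χ⁻¹).conductor = χ.conductor := by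
  apply le_antisymm
  · exact Nat.sInf_le <| factorsThrough_inv χ.factorsThrough_conductor
  · exact Nat.sInf_le <| by
      simpa [DirichletCharacter.conductorSet] using factorsThrough_inv (χ⁻¹).factorsThrough_conductor

/-- If `χ` is a primitive odd Dirichlet character modulo `q`, then
`L(0, conj χ)/L(1, χ) = τ(conj χ)/(πi)`. -/
theorem LFunction_zero_div_LFunction_one_of_odd_primitive {q : ℕ} [NeZero q]
    (χ : DirichletCharacter ℂ q) (hprim : χ.IsPrimitive) (hodd : χ.Odd) :
    DirichletCharacter.LFunction (star χ) 0 / DirichletCharacter.LFunction χ 1 =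
      gaussSumExp (star χ) / ((π : ℂ) * I) := by
  have hstar : star χ = χ⁻¹ := MulChar.star_eq_inv χ
  -- q ≠ 1
  have hq1 : q ≠ 1 := by
    rintro rfl
    have : χ = 1 := χ.level_one
    rw [this] at hodd
    have := hodd
    simp only [DirichletCharacter.Odd, MulChar.one_apply (isUnit_one.neg)] at this
    norm_num at this
  -- χ ≠ 1
  have hχ1 : χ ≠ 1 := by
    rintro rfl
    have := hodd
    simp only [DirichletCharacter.Odd, MulChar.one_apply (isUnit_one.neg)] at this
    norm_num at this
  -- χ⁻¹ is primitive and odd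
  have hprim' : (χ⁻¹).IsPrimitive := by
    rw [DirichletCharacter.IsPrimitive, conductor_inv, hprim]
  have hodd' : (χ⁻¹).Odd := by
    rw [DirichletCharacter.Odd, MulChar.inv_apply_eq_inv', hodd]
    norm_num
  have hnoteven : ¬ (χ⁻¹).Even := by
    intro h
    rw [DirichletCharacter.Even, hodd'] at h
    norm_num at h
  -- functional equation at s = 1 for χ⁻¹
  have hFE := hprim'.completedLFunction_one_sub 1
  rw [sub_self, inv_inv] at hFE
  -- Gamma factors
  have hG2 : Complex.Gammaℝ 2 = (π : ℂ)⁻¹ := by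
    rw [Complex.Gammaℝ_def]
    norm_num [Complex.Gamma_one, cpow_neg_one]
  have hG1 : Complex.Gammaℝ 1 = 1 := Complex.Gammaℝ_one
  -- express L in terms of completed L
  have hL0 : DirichletCharacter.LFunction (χ⁻¹) 0 =
      DirichletCharacter.completedLFunction (χ⁻¹) 0 := by
    rw [DirichletCharacter.LFunction_eq_completed_div_gammaFactor _ _ (Or.inr hq1),
      hodd'.gammaFactor_def, zero_add, hG1, div_one]
  have hL1 : DirichletCharacter.LFunction χ 1 =
      DirichletCharacter.completedLFunction χ 1 * π := by
    rw [DirichletCharacter.LFunction_eq_completed_div_gammaFactor _ _ (Or.inl one_ne_zero),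
      hodd.gammaFactor_def, (by norm_num : (1 : ℂ) + 1 = 2), hG2]
    field_simp
  -- root number for odd character
  have hroot : DirichletCharacter.rootNumber (χ⁻¹) =
      gaussSum (χ⁻¹) ZMod.stdAddChar / I / (q : ℂ) ^ (1 / 2 : ℂ) := by
    rw [DirichletCharacter.rootNumber, if_neg hnoteven, pow_one]
  -- nonvanishing
  have hLne : DirichletCharacter.LFunction χ 1 ≠ 0 :=
    DirichletCharacter.LFunction_apply_one_ne_zero hχ1
  have hπ : (π : ℂ) ≠ 0 := Complex.ofReal_ne_zero.mpr Real.pi_ne_zero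
  have hΛne : DirichletCharacter.completedLFunction χ 1 ≠ 0 := by
    intro h
    rw [hL1, h, zero_mul] at hLne
    exact hLne rfl
  have hqpow : (q : ℂ) ^ (1 / 2 : ℂ) ≠ 0 := by
    simp only [ne_eq, Complex.cpow_eq_zero_iff, not_and_or, not_not]
    exact Or.inl (by exact_mod_cast (NeZero.ne q))
  have hq12 : (q : ℂ) ^ (1 - 1 / 2 : ℂ) = (q : ℂ) ^ (1 / 2 : ℂ) := by
    norm_num
  rw [hstar, gaussSumExp_eq_gaussSum, hL0, hL1, hFE, hroot, hq12]
  field_simp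
end

section
/- For coprime integers a and q with q ≥ 1, (1/(i·φ(q))) Σ_{χ mod q, χ odd} χ(a) τ(conj(χ)) = sin(2πa/q), where the sum runs over odd Dirichlet characters modulo q. -/
open scoped Classical
open Real Complex

lemma oddChar_inner {q : ℕ} [NeZero q] {a : ZMod q} (ha : IsUnit a) (b : ZMod q) :
    ∑ χ : DirichletCharacter ℂ q, χ a * (star χ) b
      = if a = b then (q.totient : ℂ) else 0 := by
  have h : ∀ χ : DirichletCharacter ℂ q, χ a * (star χ) b = χ (a * Ring.inverse b) := by
    intro χ
    rw [MulChar.star_apply, MulChar.star_apply', MulChar.inv_apply, ← map_mul]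
  have key : a * Ring.inverse b = 1 ↔ a = b := by
    by_cases hb : IsUnit b
    · constructor
      · intro h1
        have := congrArg (· * b) h1
        simpa [mul_assoc, Ring.inverse_mul_cancel b hb] using this
      · rintro rfl; exact Ring.mul_inverse_cancel a ha
    · rcases subsingleton_or_nontrivial (ZMod q) with hs | hn
      · exact absurd (isUnit_of_subsingleton b) hb
      · rw [Ring.inverse_non_unit b hb, mul_zero]
        constructor
        · intro h1; exact absurd h1.symm one_ne_zero
        · rintro rfl; exact absurd ha hb
  simp_rw [h]
  rw [DirichletCharacter.sum_characters_eq]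
  simp only [key]

lemma oddChar_pick {q : ℕ} [NeZero q] (c : ZMod q) (f : ℕ → ℂ) :
    ∑ b ∈ Finset.range q, (if c = (b : ZMod q) then f b else 0) = f c.val := by
  rw [Finset.sum_eq_single c.val]
  · rw [if_pos]; simp [ZMod.natCast_val, ZMod.cast_id]
  · intro b hb hbne
    rw [if_neg]
    intro hc
    apply hbne
    have : ((b : ZMod q)).val = b := ZMod.val_cast_of_lt (Finset.mem_range.mp hb)
    rw [← hc] at this
    omega
  · intro h
    exact absurd (Finset.mem_range.mpr c.val_lt) h

lemma exp_val {q : ℕ} [NeZero q] (a : ℤ) :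
    Complex.exp (2 * π * I * ((a : ZMod q).val : ℕ) / q) = Complex.exp (2 * π * I * a / q) := by
  have hq : (q : ℂ) ≠ 0 := Nat.cast_ne_zero.mpr (NeZero.ne q)
  have hdvd : (q : ℤ) ∣ (((a : ZMod q).val : ℤ) - a) := by
    rw [← ZMod.intCast_zmod_eq_zero_iff_dvd]
    push_cast
    simp [ZMod.natCast_val, ZMod.cast_id]
  obtain ⟨k, hk⟩ := hdvd
  have hvalZ : ((a : ZMod q).val : ℤ) = a + (q : ℤ) * k := by omega
  have hval : (((a : ZMod q).val : ℤ) : ℂ) = (a : ℂ) + (q : ℂ) * (k : ℂ) := by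
    rw [hvalZ]; push_cast; ring
  rw [show ((((a : ZMod q).val : ℕ)) : ℂ) = (((a : ZMod q).val : ℤ) : ℂ) by push_cast; ring, hval]
  rw [show 2 * ↑π * I * ((a:ℂ) + (q:ℂ)*(k:ℂ)) / q = 2 * ↑π * I * a / q + (k : ℤ) * (2 * ↑π * I) by
    field_simp]
  rw [Complex.exp_add, Complex.exp_int_mul_two_pi_mul_I, mul_one]

/-- For coprime `a, q` with `q ≥ 1`,
`(1/(i φ(q))) ∑_{χ mod q odd} χ(a) τ(conj χ) = sin(2πa/q)`. -/
theorem sum_odd_char_gaussSum_eq_sin (a : ℤ) (q : ℕ) (hq : 1 ≤ q)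
    (hco : Int.gcd a q = 1) :
    (1 / (I * (Nat.totient q : ℂ))) *
      ∑ᶠ χ : DirichletCharacter ℂ q,
        (if χ.Odd then χ (a : ZMod q) * gaussSumExp (star χ) else 0) =
      ((Real.sin (2 * π * a / q) : ℝ) : ℂ) := by
  haveI : NeZero q := ⟨by omega⟩
  have hq0 : (q : ℂ) ≠ 0 := Nat.cast_ne_zero.mpr (NeZero.ne q)
  have hphi : (q.totient : ℂ) ≠ 0 := Nat.cast_ne_zero.mpr (Nat.totient_pos.mpr (by omega)).ne'
  have ha : IsUnit ((a : ZMod q)) := by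
    have h1 : IsCoprime ((a : ZMod q)) (((q : ℤ) : ZMod q)) :=
      (Int.isCoprime_iff_gcd_eq_one.mpr hco).map (Int.castRingHom (ZMod q))
    rw [Int.cast_natCast, ZMod.natCast_self] at h1
    exact isCoprime_zero_right.mp h1
  rw [finsum_eq_sum_of_fintype]
  have hstep1 : ∀ χ : DirichletCharacter ℂ q,
      (if χ.Odd then χ (a : ZMod q) * gaussSumExp (star χ) else 0)
        = (1 - χ (-1)) / 2 * (χ (a : ZMod q) * gaussSumExp (star χ)) := by
    intro χ
    rcases χ.even_or_odd with he | ho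
    · rw [if_neg he.not_odd, show χ (-1) = 1 from he]
      norm_num
    · rw [if_pos ho, show χ (-1) = -1 from ho]
      norm_num
  simp_rw [hstep1]
  have hswap : ∑ χ : DirichletCharacter ℂ q,
      (1 - χ (-1)) / 2 * (χ (a : ZMod q) * gaussSumExp (star χ))
      = ∑ b ∈ Finset.range q, Complex.exp (2 * π * I * b / q) *
          ((∑ χ : DirichletCharacter ℂ q, χ (a : ZMod q) * (star χ) (b : ZMod q)) / 2
            - (∑ χ : DirichletCharacter ℂ q, χ (-(a : ZMod q)) * (star χ) (b : ZMod q)) / 2) := by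
    unfold gaussSumExp
    simp_rw [Finset.mul_sum]
    rw [Finset.sum_comm]
    refine Finset.sum_congr rfl fun b _ => ?_
    have hterm : ∀ χ : DirichletCharacter ℂ q,
        (1 - χ (-1)) / 2 * (χ ((a : ℤ) : ZMod q) * ((star χ) ((b : ℕ) : ZMod q) * Complex.exp (2 * π * I * b / q)))
          = χ ((a : ℤ) : ZMod q) * (star χ) ((b : ℕ) : ZMod q) * Complex.exp (2 * π * I * b / q) / 2
            - χ (-((a : ℤ) : ZMod q)) * (star χ) ((b : ℕ) : ZMod q) * Complex.exp (2 * π * I * b / q) / 2 := by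
      intro χ
      have hne : χ (-((a : ℤ) : ZMod q)) = χ (-1) * χ ((a : ℤ) : ZMod q) := by
        rw [← map_mul, neg_one_mul]
      rw [hne]; ring
    simp_rw [hterm]
    rw [Finset.sum_sub_distrib, ← Finset.sum_div, ← Finset.sum_div,
      ← Finset.sum_mul, ← Finset.sum_mul]
    ring
  rw [hswap]
  simp_rw [oddChar_inner ha, oddChar_inner ha.neg]
  simp_rw [mul_sub, ite_div, zero_div, mul_ite, mul_zero]
  rw [Finset.sum_sub_distrib, oddChar_pick, oddChar_pick]
  rw [show (-((a : ℤ) : ZMod q)) = (((-a : ℤ)) : ZMod q) by push_cast; ring]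
  rw [exp_val (q := q) a, exp_val (q := q) (-a)]
  rw [Complex.ofReal_sin]
  rw [show ((2 * π * (a : ℝ) / (q : ℝ) : ℝ) : ℂ) = 2 * (π : ℂ) * (a : ℂ) / (q : ℂ) by push_cast; ring]
  rw [Complex.sin]
  rw [show 2 * (π : ℂ) * I * (a : ℂ) / (q : ℂ) = (2 * (π:ℂ) * (a:ℂ) / (q:ℂ)) * I by ring]
  rw [show 2 * (π : ℂ) * I * ((-a : ℤ) : ℂ) / (q : ℂ) = -(2 * (π:ℂ) * (a:ℂ) / (q:ℂ)) * I by push_cast; ring]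
  have hI : I * I = -1 := Complex.I_mul_I
  field_simp
  ring_nf
  simp only [Complex.I_sq]
  ring
end

section
/- For a non-principal primitive character χ₁ modulo q₁ inducing χ modulo q: if gcd(q₁, q/q₁) > 1 or q/q₁ is not squarefree then τ(χ) = 0; and if gcd(q₁, q/q₁) = 1 and q/q₁ is squarefree then τ(χ) = μ(q/q₁) χ₁(q/q₁) τ(χ₁). -/
open Real Complex

private lemma geom_exp_sum (m : ℕ) (hm : m ≠ 0) :
    ∑ s ∈ Finset.range m, Complex.exp (2 * π * I * s / m) = if m = 1 then 1 else 0 := by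
  rcases eq_or_ne m 1 with h | h
  · subst h; simp
  · rw [if_neg h]
    have hone : 1 < m := lt_of_le_of_ne (Nat.one_le_iff_ne_zero.mpr hm) (Ne.symm h)
    have hgeom := (Complex.isPrimitiveRoot_exp m hm).geom_sum_eq_zero hone
    rw [← hgeom]
    refine Finset.sum_congr rfl fun s _ => ?_
    rw [← Complex.exp_nat_mul]
    congr 1
    field_simp

private lemma sum_range_mul_split (a m : ℕ) (g : ℕ → ℂ) :
    ∑ c ∈ Finset.range (a * m), g c
      = ∑ r ∈ Finset.range a, ∑ s ∈ Finset.range m, g (r + a * s) := by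
  induction m with
  | zero => simp
  | succ n ih =>
      rw [Nat.mul_succ, Finset.sum_range_add, ih]
      simp_rw [Finset.sum_range_succ, Finset.sum_add_distrib]
      congr 1
      refine Finset.sum_congr rfl fun x _ => ?_
      rw [Nat.add_comm]

private lemma sum_ite_dvd (i N : ℕ) (hi : i ≠ 0) (f : ℕ → ℂ) :
    ∑ b ∈ Finset.range (i * N), (if i ∣ b then f b else 0)
      = ∑ c ∈ Finset.range N, f (i * c) := by
  induction N with
  | zero => simp
  | succ n ih =>
      rw [Nat.mul_succ, Finset.sum_range_add, ih, Finset.sum_range_succ]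
      congr 1
      rw [Finset.sum_eq_single 0]
      · simp
      · intro x hx hx0
        rw [if_neg]
        intro h
        have hix : i ∣ x := (Nat.dvd_add_right (dvd_mul_right i n)).mp h
        have hle := Nat.le_of_dvd (Nat.pos_of_ne_zero hx0) hix
        have := Finset.mem_range.mp hx
        omega
      · intro h
        exact absurd (Finset.mem_range.mpr (Nat.pos_of_ne_zero hi)) h

private lemma gaussExp_inner_sum (q₁ d i : ℕ) (hq₁ : q₁ ≠ 0) (hd : d ≠ 0) (hid : i ∣ d)
    (χ₁ : DirichletCharacter ℂ q₁) (C : ℂ) :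
    ∑ b ∈ Finset.range (q₁ * d), (if i ∣ b then C * (χ₁ ((b : ℕ) : ZMod q₁) *
        Complex.exp (2 * π * I * b / ((q₁ * d : ℕ) : ℂ))) else 0)
      = C * ((∑ r ∈ Finset.range q₁, χ₁ ((i * r : ℕ) : ZMod q₁) *
          Complex.exp (2 * π * I * r / ((q₁ * (d / i) : ℕ) : ℂ))) *
        (if d / i = 1 then 1 else 0)) := by
  have hi0 : i ≠ 0 := fun h => hd (by simpa [h] using hid)
  have hmi : d / i ≠ 0 := fun h => hd (by rw [← Nat.div_mul_cancel hid, h, zero_mul])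
  have hiC : (i : ℂ) ≠ 0 := Nat.cast_ne_zero.mpr hi0
  have hq₁C : (q₁ : ℂ) ≠ 0 := Nat.cast_ne_zero.mpr hq₁
  have hmC : ((d / i : ℕ) : ℂ) ≠ 0 := Nat.cast_ne_zero.mpr hmi
  have hrange : i * (q₁ * (d / i)) = q₁ * d := by
    rw [mul_left_comm, Nat.mul_div_cancel' hid]
  have hcast : ((i * (q₁ * (d / i)) : ℕ) : ℂ) = (i : ℂ) * ((q₁ * (d / i) : ℕ) : ℂ) := by
    push_cast; ring
  rw [← hrange, sum_ite_dvd i (q₁ * (d / i)) hi0]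
  have hexp : ∀ c : ℕ, Complex.exp (2 * π * I * ((i * c : ℕ) : ℂ) / ((i * (q₁ * (d / i)) : ℕ) : ℂ))
      = Complex.exp (2 * π * I * c / ((q₁ * (d / i) : ℕ) : ℂ)) := by
    intro c
    congr 1
    rw [hcast]
    have : (2 : ℂ) * π * I * ((i * c : ℕ) : ℂ) = (i : ℂ) * (2 * π * I * c) := by
      push_cast; ring
    rw [this, mul_div_mul_left _ _ hiC]
  calc ∑ c ∈ Finset.range (q₁ * (d / i)),
        (C * (χ₁ ((i * c : ℕ) : ZMod q₁) *
          Complex.exp (2 * π * I * ((i * c : ℕ) : ℂ) / ((i * (q₁ * (d / i)) : ℕ) : ℂ))))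
      = ∑ r ∈ Finset.range q₁, ∑ s ∈ Finset.range (d / i),
          C * ((χ₁ ((i * r : ℕ) : ZMod q₁) *
            Complex.exp (2 * π * I * r / ((q₁ * (d / i) : ℕ) : ℂ))) *
            Complex.exp (2 * π * I * s / ((d / i : ℕ) : ℂ))) := by
        rw [sum_range_mul_split]
        refine Finset.sum_congr rfl fun r hr => Finset.sum_congr rfl fun s hs => ?_
        rw [hexp]
        have h1 : ((i * (r + q₁ * s) : ℕ) : ZMod q₁) = ((i * r : ℕ) : ZMod q₁) := by
          push_cast [ZMod.natCast_self]; ring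
        rw [h1]
        have h2 : Complex.exp (2 * π * I * ((r + q₁ * s : ℕ) : ℂ) / ((q₁ * (d / i) : ℕ) : ℂ))
            = Complex.exp (2 * π * I * r / ((q₁ * (d / i) : ℕ) : ℂ)) *
              Complex.exp (2 * π * I * s / ((d / i : ℕ) : ℂ)) := by
          rw [← Complex.exp_add]
          congr 1
          rw [Nat.cast_mul q₁ (d / i), Nat.cast_add, Nat.cast_mul]
          have hmC' := hmC
          generalize ((d / i : ℕ) : ℂ) = m at hmC' ⊢
          field_simp
        rw [h2]
        ring
    _ = C * ((∑ r ∈ Finset.range q₁, χ₁ ((i * r : ℕ) : ZMod q₁) *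
          Complex.exp (2 * π * I * r / ((q₁ * (d / i) : ℕ) : ℂ))) *
        (∑ s ∈ Finset.range (d / i), Complex.exp (2 * π * I * s / ((d / i : ℕ) : ℂ)))) := by
        rw [Finset.sum_mul_sum, Finset.mul_sum]
        refine Finset.sum_congr rfl fun r hr => ?_
        rw [Finset.mul_sum]
    _ = _ := by rw [geom_exp_sum _ hmi]

private lemma key_formula (q₁ d : ℕ) (hq₁ : q₁ ≠ 0) (hd : d ≠ 0)
    (χ₁ : DirichletCharacter ℂ q₁) :
    gaussSumExp (DirichletCharacter.changeLevel (dvd_mul_right q₁ d) χ₁) =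
      (ArithmeticFunction.moebius d : ℂ) * χ₁ ((d : ℕ) : ZMod q₁) * gaussSumExp χ₁ := by
  haveI : NeZero q₁ := ⟨hq₁⟩
  haveI : NeZero (q₁ * d) := ⟨mul_ne_zero hq₁ hd⟩
  -- Step A : value of the induced character
  have hA : ∀ b : ℕ,
      (DirichletCharacter.changeLevel (dvd_mul_right q₁ d) χ₁) ((b : ℕ) : ZMod (q₁ * d))
        = (if Nat.Coprime b d then 1 else 0) * χ₁ ((b : ℕ) : ZMod q₁) := by
    intro b
    by_cases hb : IsUnit ((b : ℕ) : ZMod (q₁ * d))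
    · have hco : Nat.Coprime b (q₁ * d) := (ZMod.isUnit_iff_coprime b (q₁ * d)).mp hb
      rw [if_pos (Nat.Coprime.coprime_dvd_right (dvd_mul_left d q₁) hco), one_mul]
      have h2 := DirichletCharacter.changeLevel_eq_cast_of_dvd χ₁ (dvd_mul_right q₁ d) hb.unit
      rw [hb.unit_spec] at h2
      rw [h2, ZMod.cast_natCast (dvd_mul_right q₁ d)]
    · rw [MulChar.map_nonunit _ hb]
      rw [ZMod.isUnit_iff_coprime, Nat.coprime_mul_iff_right] at hb
      push_neg at hb
      by_cases h1 : Nat.Coprime b q₁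
      · rw [if_neg (hb h1), zero_mul]
      · rw [MulChar.map_nonunit, mul_zero]
        rwa [ZMod.isUnit_iff_coprime]
  -- Step B : Möbius detection of coprimality
  have hB : ∀ b : ℕ, (if Nat.Coprime b d then (1 : ℂ) else 0)
      = ∑ i ∈ d.divisors, (if i ∣ b then ((ArithmeticFunction.moebius i : ℤ) : ℂ) else 0) := by
    intro b
    have hfil : d.divisors.filter (· ∣ b) = (Nat.gcd b d).divisors := by
      ext i
      simp only [Finset.mem_filter, Nat.mem_divisors, Nat.dvd_gcd_iff]
      constructor
      · rintro ⟨⟨hid, hd0⟩, hib⟩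
        exact ⟨⟨hib, hid⟩, fun h => hd (Nat.eq_zero_of_gcd_eq_zero_right h)⟩
      · rintro ⟨⟨hib, hid⟩, -⟩
        exact ⟨⟨hid, hd⟩, hib⟩
    have h1 : ∑ i ∈ d.divisors, (if i ∣ b then (ArithmeticFunction.moebius i : ℤ) else 0)
        = ∑ i ∈ (Nat.gcd b d).divisors, (ArithmeticFunction.moebius i : ℤ) := by
      rw [← hfil, Finset.sum_filter]
    have h2 : ∑ i ∈ (Nat.gcd b d).divisors, (ArithmeticFunction.moebius i : ℤ)
        = if Nat.gcd b d = 1 then 1 else 0 := by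
      rw [← ArithmeticFunction.coe_mul_zeta_apply, ArithmeticFunction.moebius_mul_coe_zeta,
        ArithmeticFunction.one_apply]
    have h3 : (if Nat.Coprime b d then (1 : ℂ) else 0)
        = (((if Nat.gcd b d = 1 then 1 else 0 : ℤ)) : ℂ) := by
      simp only [Nat.Coprime]
      split <;> simp
    rw [h3, ← h2, ← h1]
    push_cast
    rfl
  -- Main computation
  have hEq : gaussSumExp (DirichletCharacter.changeLevel (dvd_mul_right q₁ d) χ₁)
      = ∑ i ∈ d.divisors, ((ArithmeticFunction.moebius i : ℤ) : ℂ) *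
          ((∑ r ∈ Finset.range q₁,
              χ₁ ((i * r : ℕ) : ZMod q₁) *
                Complex.exp (2 * π * I * r / ((q₁ * (d / i) : ℕ) : ℂ))) *
            (if d / i = 1 then 1 else 0)) := by
    rw [gaussSumExp]
    calc
      ∑ b ∈ Finset.range (q₁ * d),
          (DirichletCharacter.changeLevel (dvd_mul_right q₁ d) χ₁) ((b : ℕ) : ZMod (q₁ * d)) *
            Complex.exp (2 * π * I * b / ((q₁ * d : ℕ) : ℂ))
        = ∑ b ∈ Finset.range (q₁ * d), ∑ i ∈ d.divisors,
            (if i ∣ b then ((ArithmeticFunction.moebius i : ℤ) : ℂ) *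
              (χ₁ ((b : ℕ) : ZMod q₁) *
                Complex.exp (2 * π * I * b / ((q₁ * d : ℕ) : ℂ))) else 0) := by
          refine Finset.sum_congr rfl fun b _ => ?_
          rw [hA b, hB b, Finset.sum_mul, Finset.sum_mul]
          refine Finset.sum_congr rfl fun i _ => ?_
          rw [ite_mul, ite_mul, zero_mul, zero_mul, mul_assoc]
      _ = ∑ i ∈ d.divisors, ∑ b ∈ Finset.range (q₁ * d),
            (if i ∣ b then ((ArithmeticFunction.moebius i : ℤ) : ℂ) *
              (χ₁ ((b : ℕ) : ZMod q₁) *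
                Complex.exp (2 * π * I * b / ((q₁ * d : ℕ) : ℂ))) else 0) := by
          rw [Finset.sum_comm]
      _ = _ := by
          refine Finset.sum_congr rfl fun i hi => ?_
          obtain ⟨hid, -⟩ := Nat.mem_divisors.mp hi
          exact gaussExp_inner_sum q₁ d i hq₁ hd hid χ₁ _
  rw [hEq, Finset.sum_eq_single_of_mem d (Nat.mem_divisors_self d hd)]
  · rw [Nat.div_self (Nat.pos_of_ne_zero hd), if_pos rfl, mul_one, Nat.mul_one]
    rw [gaussSumExp, mul_assoc, Finset.mul_sum, Finset.mul_sum]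
    refine Finset.sum_congr rfl fun r _ => ?_
    have hcast : ((d * r : ℕ) : ZMod q₁) = ((d : ℕ) : ZMod q₁) * ((r : ℕ) : ZMod q₁) := by
      push_cast; ring
    rw [hcast, map_mul]
    ring
  · intro i hi hne
    obtain ⟨hid, -⟩ := Nat.mem_divisors.mp hi
    rw [if_neg, mul_zero, mul_zero]
    intro h
    exact hne (by rw [← Nat.mul_div_cancel' hid, h, mul_one])

/-- If `χ₁` is a non-principal primitive character mod `q₁` inducing `χ` mod `q`, then
`τ(χ) = 0` unless `gcd(q₁, q/q₁) = 1` and `q/q₁` is squarefree, in which case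
`τ(χ) = μ(q/q₁) χ₁(q/q₁) τ(χ₁)`. -/
theorem gaussSum_changeLevel {q₁ q : ℕ} (hq : 0 < q) (hdvd : q₁ ∣ q)
    (χ₁ : DirichletCharacter ℂ q₁) (hne : χ₁ ≠ 1) (hprim : χ₁.IsPrimitive) :
    ((¬Nat.Coprime q₁ (q / q₁) ∨ ¬Squarefree (q / q₁)) →
      gaussSumExp (DirichletCharacter.changeLevel hdvd χ₁) = 0) ∧
    (Nat.Coprime q₁ (q / q₁) → Squarefree (q / q₁) →
      gaussSumExp (DirichletCharacter.changeLevel hdvd χ₁) =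
        (ArithmeticFunction.moebius (q / q₁) : ℂ) * χ₁ ((q / q₁ : ℕ) : ZMod q₁) *
          gaussSumExp χ₁) := by
  obtain ⟨d, rfl⟩ := id hdvd
  have hq₁ : q₁ ≠ 0 := by rintro rfl; simp at hq
  have hd : d ≠ 0 := by rintro rfl; simp at hq
  haveI : NeZero q₁ := ⟨hq₁⟩
  have hdq : q₁ * d / q₁ = d := Nat.mul_div_cancel_left d (Nat.pos_of_ne_zero hq₁)
  have hkey : gaussSumExp (DirichletCharacter.changeLevel hdvd χ₁) =
      (ArithmeticFunction.moebius d : ℂ) * χ₁ ((d : ℕ) : ZMod q₁) * gaussSumExp χ₁ :=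
    key_formula q₁ d hq₁ hd χ₁
  rw [hdq]
  constructor
  · rintro (h | h) <;> rw [hkey]
    · rw [MulChar.map_nonunit, mul_zero, zero_mul]
      rw [ZMod.isUnit_iff_coprime]
      exact fun hc => h (Nat.coprime_comm.mp hc)
    · rw [ArithmeticFunction.moebius_eq_zero_of_not_squarefree h]
      simp
  · intro _ _
    exact hkey
end

section
/- For every irrational α, if p_m/q_m denote the convergents of the continued fraction expansion of α, then Σ_{m=1}^∞ 1/φ(q_m) is bounded by an absolute constant independent of α. -/
open Real

/-- Odd numbers satisfy `n ≤ φ(n)^2`. -/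
lemma aux_odd_le_totient_sq : ∀ n : ℕ, Odd n → n ≤ Nat.totient n ^ 2 := by
  intro n
  induction n using Nat.recOnPosPrimePosCoprime with
  | prime_pow p k hp hk =>
    intro hodd
    have hp' : p.Prime := hp
    have hp2 : p ≠ 2 := by
      rintro rfl
      have hev : Even (2 ^ k) := (Nat.even_pow).mpr ⟨even_two, hk.ne'⟩
      exact (Nat.not_even_iff_odd.mpr hodd) hev
    have h3 : 3 ≤ p := by
      have := hp'.two_le
      omega
    rw [Nat.totient_prime_pow hp' hk]
    have hk1 : k - 1 + 1 = k := by omega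
    calc p ^ k = p ^ (k - 1) * p := by rw [← pow_succ, hk1]
      _ ≤ p ^ (2 * (k - 1)) * (p - 1) ^ 2 := by
          apply Nat.mul_le_mul
          · exact Nat.pow_le_pow_right hp'.pos (by omega)
          · have : p - 1 + 1 = p := by omega
            nlinarith [this]
      _ = (p ^ (k - 1) * (p - 1)) ^ 2 := by ring
  | zero => intro h; simp at h
  | one => intro _; simp
  | coprime a b ha hb hab iha ihb =>
    intro hodd
    rw [Nat.odd_mul] at hodd
    rw [Nat.totient_mul hab, mul_pow]
    exact Nat.mul_le_mul (iha hodd.1) (ihb hodd.2)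

/-- For all `n ≥ 1`, `n ≤ 2 φ(n)^2`. -/
lemma aux_le_two_totient_sq (n : ℕ) (hn : 1 ≤ n) : n ≤ 2 * Nat.totient n ^ 2 := by
  set k := n.factorization 2 with hk
  set m := n / 2 ^ k with hm
  have hsplit : 2 ^ k * m = n := Nat.ordProj_mul_ordCompl_eq_self n 2
  have hm_odd : Odd m := by
    rw [Nat.odd_iff, ← Nat.two_dvd_ne_zero]
    exact Nat.not_dvd_ordCompl Nat.prime_two (by omega)
  have hm_le := aux_odd_le_totient_sq m hm_odd
  rcases Nat.eq_zero_or_pos k with h0 | hpos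
  · rw [h0, pow_zero, one_mul] at hsplit
    rw [← hsplit]
    omega
  · have hcop : Nat.Coprime (2 ^ k) m := by
      apply Nat.Coprime.pow_left
      rw [Nat.coprime_two_left]
      exact hm_odd
    rw [← hsplit, Nat.totient_mul hcop, Nat.totient_prime_pow Nat.prime_two hpos]
    have h2 : 2 ^ k * m ≤ 2 * (2 ^ (k - 1) * (2 - 1) * Nat.totient m) ^ 2 := by
      have e1 : 2 * (2 ^ (k - 1) * (2 - 1) * Nat.totient m) ^ 2
          = (2 * 2 ^ (2 * (k - 1))) * Nat.totient m ^ 2 := by ring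
      rw [e1]
      apply Nat.mul_le_mul _ hm_le
      have : 2 * 2 ^ (2 * (k - 1)) = 2 ^ (2 * k - 1) := by
        rw [← pow_succ']
        congr 1
        omega
      rw [this]
      exact Nat.pow_le_pow_right (by norm_num) (by omega)
    exact h2

section Growth
variable (qd a : ℕ → ℕ) (hq0 : qd 0 = 1) (hq1 : qd 1 = a 1)
  (ha : ∀ m, 1 ≤ a m) (hrec : ∀ m, qd (m + 2) = a (m + 2) * qd (m + 1) + qd m)

include hq0 hq1 ha hrec in
lemma aux_qd_pos_mono : ∀ m, 1 ≤ qd m ∧ qd m ≤ qd (m + 1) := by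
  intro m
  induction m with
  | zero => refine ⟨by omega, ?_⟩; rw [hq0, hq1]; exact ha 1
  | succ n ih =>
    obtain ⟨h1, h2⟩ := ih
    have h1' : 1 ≤ qd (n + 1) := le_trans h1 h2
    refine ⟨h1', ?_⟩
    rw [hrec n]
    have := Nat.le_mul_of_pos_left (qd (n + 1)) (ha (n + 2))
    omega

include hq0 hq1 ha hrec in
lemma aux_qd_growth : ∀ m, 2 ^ (m / 2) ≤ qd m := by
  intro m
  induction m using Nat.strong_induction_on with
  | _ m ih =>
    match m with
    | 0 => simp [hq0]
    | 1 => simpa [hq1] using ha 1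
    | (n + 2) =>
      have hih := ih n (by omega)
      have hmono := (aux_qd_pos_mono qd a hq0 hq1 ha hrec n).2
      have hpos := (aux_qd_pos_mono qd a hq0 hq1 ha hrec (n + 1)).1
      have hb : qd (n + 2) ≥ 2 * qd n := by
        rw [hrec n]
        have := Nat.le_mul_of_pos_left (qd (n + 1)) (ha (n + 2))
        omega
      have : (n + 2) / 2 = n / 2 + 1 := by omega
      rw [this, pow_succ]
      calc 2 ^ (n / 2) * 2 ≤ qd n * 2 := by omega
        _ ≤ qd (n + 2) := by omega
end Growth

/-- For irrational `α` with continued fraction convergents `p_m/q_m`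
(denominators satisfying `q_{m+2} = a_{m+2} q_{m+1} + q_m` with partial quotients
`a_m ≥ 1`), the series `∑_m 1/φ(q_m)` is bounded by an absolute constant. -/
theorem sum_one_div_totient_convergent_denoms_bounded :
    ∃ C : ℝ, 0 < C ∧ ∀ α : ℝ, Irrational α → ∀ p : ℕ → ℤ, ∀ qd a : ℕ → ℕ,
      qd 0 = 1 → qd 1 = a 1 → (∀ m, 1 ≤ a m) →
      (∀ m, qd (m + 2) = a (m + 2) * qd (m + 1) + qd m) →
      (∀ m, |α - (p m : ℝ) / qd m| < 1 / ((qd m : ℝ) * qd (m + 1))) →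
      ∀ M : ℕ, ∑ m ∈ Finset.range M, (1 : ℝ) / Nat.totient (qd m) ≤ C := by
  set r : ℝ := (2 : ℝ) ^ (-(4 : ℝ)⁻¹) with hr
  have hr0 : 0 < r := Real.rpow_pos_of_pos (by norm_num) _
  have hr1 : r < 1 := Real.rpow_lt_one_of_one_lt_of_neg (by norm_num) (by norm_num)
  have h1r : (0 : ℝ) < 1 - r := by linarith
  refine ⟨4 / (1 - r), by positivity, ?_⟩
  intro α hα p qd a hq0 hq1 ha hrec happrox M
  have hterm : ∀ m, (1 : ℝ) / Nat.totient (qd m) ≤ 4 * r ^ m := by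
    intro m
    set e := (m / 2 - 1) / 2 with he
    have hgrow := aux_qd_growth qd a hq0 hq1 ha hrec m
    have hqpos := (aux_qd_pos_mono qd a hq0 hq1 ha hrec m).1
    have htot := aux_le_two_totient_sq (qd m) hqpos
    have hφpos : 0 < Nat.totient (qd m) := Nat.totient_pos.mpr (by omega)
    have hφ : 2 ^ e ≤ Nat.totient (qd m) := by
      rcases Nat.lt_or_ge m 2 with hm2 | hm2
      · have he0 : e = 0 := by omega
        rw [he0, pow_zero]
        exact hφpos
      · by_contra hcon
        push_neg at hcon
        have h1 : Nat.totient (qd m) ^ 2 < (2 ^ e) ^ 2 :=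
          Nat.pow_lt_pow_left hcon (by norm_num)
        have h2 : ((2 : ℕ) ^ e) ^ 2 = 2 ^ (e * 2) := by rw [← pow_mul]
        have h3 : 2 ^ (e * 2 + 1) ≤ 2 ^ (m / 2) :=
          Nat.pow_le_pow_right (by norm_num) (by omega)
        have h4 : 2 * Nat.totient (qd m) ^ 2 < 2 ^ (e * 2 + 1) := by
          rw [pow_succ, mul_comm _ 2]
          omega
        omega
    have hφR : (2 : ℝ) ^ (e : ℕ) ≤ (Nat.totient (qd m) : ℝ) := by exact_mod_cast hφ
    have hstep : (1 : ℝ) / Nat.totient (qd m) ≤ 1 / (2 : ℝ) ^ (e : ℕ) :=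
      one_div_le_one_div_of_le (by positivity) hφR
    refine hstep.trans ?_
    have hme : m ≤ 4 * e + 8 := by omega
    have hinv : (1 : ℝ) / (2 : ℝ) ^ (e : ℕ) = (2 : ℝ) ^ (-(e : ℝ)) := by
      rw [Real.rpow_neg (by norm_num), Real.rpow_natCast, one_div]
    have hrm : (4 : ℝ) * r ^ m = (2 : ℝ) ^ ((2 : ℝ) + (-(4 : ℝ)⁻¹ * m)) := by
      rw [Real.rpow_add (by norm_num : (0 : ℝ) < 2)]
      congr 1
      · rw [show ((2 : ℝ) : ℝ) = ((2 : ℕ) : ℝ) by norm_num, Real.rpow_natCast]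
        norm_num
      · rw [hr, ← Real.rpow_natCast ((2 : ℝ) ^ (-(4 : ℝ)⁻¹)) m,
          ← Real.rpow_mul (by norm_num)]
    rw [hinv, hrm]
    apply (Real.rpow_le_rpow_left_iff (by norm_num : (1 : ℝ) < 2)).mpr
    have : (m : ℝ) ≤ 4 * (e : ℝ) + 8 := by exact_mod_cast hme
    nlinarith
  calc ∑ m ∈ Finset.range M, (1 : ℝ) / Nat.totient (qd m)
      ≤ ∑ m ∈ Finset.range M, 4 * r ^ m :=
        Finset.sum_le_sum fun m _ => hterm m
    _ = 4 * ∑ m ∈ Finset.range M, r ^ m := by rw [Finset.mul_sum]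
    _ ≤ 4 / (1 - r) := by
        have hgeom : ∑ m ∈ Finset.range M, r ^ m ≤ 1 / (1 - r) := by
          rw [geom_sum_eq hr1.ne,
            show r ^ M - 1 = -(1 - r ^ M) by ring,
            show r - 1 = -(1 - r) by ring, neg_div_neg_eq]
          apply (div_le_div_iff_of_pos_right h1r).mpr
          nlinarith [pow_nonneg hr0.le M]
        rw [div_eq_mul_one_div]
        nlinarith [hgeom]
end
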